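/- If G is any graph and T ⊆ G is any normal tree, then every end of G in the closure of V(T) contains exactly one normal ray of T. Moreover, sending these ends to the normal rays they contain defines a bijection between ∂_Ω T and the set of normal rays of T. -/

import Mathlib

/-! Basic notions for the theory of stars and combs in infinite graphs. -/

universe u

open SimpleGraph

namespace StarsCombs

variable {V : Type u} {ι : Type u}

/-- A ray in the graph `G`: an injective sequence of consecutively adjacent vertices. -/
def IsRay (G : SimpleGraph V) (r : ℕ → V) : Prop :=
  Function.Injective r ∧ ∀ n, G.Adj (r n) (r (n + 1))

/-- The vertex `v` dominates the ray `r` in `G`: there is an infinite `v`–`(R − v)` fan,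
i.e. infinitely many paths from `v` to pairwise distinct vertices of the ray other than `v`,
each meeting the ray only in its last vertex, and pairwise meeting only in `v`. -/
def Dominates (G : SimpleGraph V) (v : V) (r : ℕ → V) : Prop :=
  ∃ (t : ℕ → ℕ) (p : ∀ n, G.Walk v (r (t n))),
    Function.Injective t ∧ (∀ n, r (t n) ≠ v) ∧ (∀ n, (p n).IsPath) ∧
    (∀ n w, w ∈ (p n).support → w ≠ v → w ∈ Set.range r → w = r (t n)) ∧
    (∀ m n, m ≠ n → ∀ w, w ∈ (p m).support → w ∈ (p n).support → w = v)

/-- A ray is undominated if no vertex dominates it. -/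
def Undominated (G : SimpleGraph V) (r : ℕ → V) : Prop := ∀ v, ¬ Dominates G v r

/-- A comb attached to `U`: the union of a ray (the spine) with infinitely many pairwise
disjoint finite paths, possibly trivial, that have precisely their first vertex on the spine;
the last vertices of those paths (the teeth) all lie in `U`. -/
structure Comb (G : SimpleGraph V) (U : Set V) where
  spine : ℕ → V
  spine_ray : IsRay G spine
  start : ℕ → ℕ
  tooth : ℕ → V
  tooth_mem : ∀ n, tooth n ∈ U
  path : ∀ n, G.Walk (spine (start n)) (tooth n)
  path_isPath : ∀ n, (path n).IsPath
  meets_spine : ∀ n w, w ∈ (path n).support → w ∈ Set.range spine → w = spine (start n)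
  paths_disjoint : ∀ m n, m ≠ n → ∀ w, w ∈ (path m).support → w ∉ (path n).support

/-- A subdivided infinite star attached to `U`: a centre together with infinitely many
nontrivial paths from the centre to pairwise distinct leaves in `U`, any two of which meet
exactly in the centre. -/
structure Star (G : SimpleGraph V) (U : Set V) where
  center : V
  leaf : ℕ → V
  leaf_mem : ∀ n, leaf n ∈ U
  leaf_ne : ∀ n, leaf n ≠ center
  path : ∀ n, G.Walk center (leaf n)
  path_isPath : ∀ n, (path n).IsPath
  paths_disjoint : ∀ m n, m ≠ n → ∀ w, w ∈ (path m).support → w ∈ (path n).support → w = center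

/-- `G` contains a comb attached to `U`. -/
def HasComb (G : SimpleGraph V) (U : Set V) : Prop := Nonempty (Comb G U)

/-- `G` contains a star attached to `U`. -/
def HasStar (G : SimpleGraph V) (U : Set V) : Prop := Nonempty (Star G U)

/-- `G` contains a dominated comb attached to `U`: a comb attached to `U` whose spine is
dominated by some vertex. -/
def HasDominatedComb (G : SimpleGraph V) (U : Set V) : Prop :=
  ∃ c : Comb G U, ∃ v, Dominates G v c.spine

/-- Two rays are equivalent (belong to the same end of `G`): for every finite vertex set `X`,
tails of the two rays lie in the same component of `G − X`. -/
def EquivRays (G : SimpleGraph V) (r s : ℕ → V) : Prop :=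
  ∀ X : Set V, X.Finite → ∃ (m n : ℕ) (p : G.Walk (r m) (s n)),
    (∀ w ∈ p.support, w ∉ X) ∧ (∀ k, m ≤ k → r k ∉ X) ∧ (∀ k, n ≤ k → s k ∉ X)

/-- The end of the ray `r` lies in the closure of `U` in `G`: there is a comb attached to `U`
whose spine is equivalent to `r`.  (As a predicate on rays, this describes the set `∂_Ω U` of
ends of `G` lying in the closure of `U`.) -/
def InClosure (G : SimpleGraph V) (U : Set V) (r : ℕ → V) : Prop :=
  ∃ c : Comb G U, EquivRays G c.spine r

/-- A vertex set is dispersed if there is no comb attached to it. -/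
def Dispersed (G : SimpleGraph V) (D : Set V) : Prop := ¬ HasComb G D

/-! ### Rooted trees and normal trees inside a graph -/

/-- A rooted tree `T ⊆ G`: a subgraph of `G` that is a tree, with a root. -/
structure RootedTree (G : SimpleGraph V) where
  sub : G.Subgraph
  root : V
  root_mem : root ∈ sub.verts
  isTree : sub.coe.IsTree

namespace RootedTree

variable {G : SimpleGraph V}

/-- The tree-order of a rooted tree: `x ≤ y` iff `x` lies on the (unique) path in the tree
from the root to `y`. -/
def tle (T : RootedTree G) (x y : V) : Prop :=
  ∃ (hx : x ∈ T.sub.verts) (hy : y ∈ T.sub.verts),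
    ∀ p : T.sub.coe.Walk ⟨T.root, T.root_mem⟩ ⟨y, hy⟩, p.IsPath →
      (⟨x, hx⟩ : T.sub.verts) ∈ p.support

/-- A rooted tree `T ⊆ G` is normal in `G` if the endvertices of every `T`-path in `G`
(a nontrivial path meeting `T` exactly in its endvertices) are comparable in the
tree-order of `T`. -/
def IsNormal (T : RootedTree G) : Prop :=
  ∀ ⦃a b : V⦄ (p : G.Walk a b), p.IsPath → 0 < p.length →
    a ∈ T.sub.verts → b ∈ T.sub.verts →
    (∀ w ∈ p.support, w ≠ a → w ≠ b → w ∉ T.sub.verts) →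
    (T.tle a b ∨ T.tle b a)

/-- A ray of the tree `T`. -/
def IsRayIn (T : RootedTree G) (r : ℕ → V) : Prop :=
  Function.Injective r ∧ ∀ n, T.sub.Adj (r n) (r (n + 1))

/-- A normal ray of `T`: a ray of `T` starting at the root. -/
def IsNormalRay (T : RootedTree G) (r : ℕ → V) : Prop :=
  T.IsRayIn r ∧ r 0 = T.root

/-- `T` contains `U` cofinally: `U ⊆ V(T)` and every node of `T` lies below some element
of `U` in the tree-order. -/
def ContainsCofinally (T : RootedTree G) (U : Set V) : Prop :=
  U ⊆ T.sub.verts ∧ ∀ t ∈ T.sub.verts, ∃ u ∈ U, T.tle t u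

/-- `T` is rayless. -/
def Rayless (T : RootedTree G) : Prop := ¬ ∃ r, T.IsRayIn r

/-- `T` is locally finite. -/
def LocallyFinite (T : RootedTree G) : Prop := ∀ v, {w | T.sub.Adj v w}.Finite

/-- `T` is a spanning tree. -/
def Spanning (T : RootedTree G) : Prop := T.sub.verts = Set.univ

end RootedTree

/-- Every component of `G − S` has finite neighbourhood (in `S`). -/
def CompFiniteNbhd (G : SimpleGraph V) (S : Set V) : Prop :=
  ∀ C : G.ComponentCompl S, {v ∈ S | ∃ w ∈ C.supp, G.Adj v w}.Finite

/-! ### Abstract (decomposition) trees -/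

/-- Tree-order of the tree `T` with root `root`: `x ≤ y` iff `x` lies on every
root–`y` path. -/
def treeLE (T : SimpleGraph ι) (root x y : ι) : Prop :=
  ∀ p : T.Walk root y, p.IsPath → x ∈ p.support

/-- `k` lies on the same side of the edge `ij` as `j` (there is a `j`–`k` walk
avoiding `i`). -/
def SameSide (T : SimpleGraph ι) (i j k : ι) : Prop :=
  ∃ p : T.Walk j k, i ∉ p.support

/-- The oriented edge `(i, j)` of the tree `T` points away from the root. -/
def PointsAway (T : SimpleGraph ι) (root i j : ι) : Prop :=
  T.Adj i j ∧ treeLE T root i j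

/-- A ray of the (abstract) tree `T`. -/
def IsTreeRay (T : SimpleGraph ι) (R : ℕ → ι) : Prop :=
  Function.Injective R ∧ ∀ n, T.Adj (R n) (R (n + 1))

/-- The tree `T` is rayless. -/
def RaylessTree (T : SimpleGraph ι) : Prop := ¬ ∃ R, IsTreeRay T R

/-- The tree `T` is locally finite. -/
def LocallyFiniteTree (T : SimpleGraph ι) : Prop := ∀ t, {s | T.Adj t s}.Finite

/-- `t` is a leaf of the tree `T` (it has at most one neighbour). -/
def IsLeafNode (T : SimpleGraph ι) (t : ι) : Prop := {s | T.Adj t s}.Subsingleton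

/-- The sequence `r` eventually lies in `S`. -/
def EventuallyIn (r : ℕ → V) (S : Set V) : Prop := ∃ N, ∀ n, N ≤ n → r n ∈ S

/-- Two rays share a tail (and hence belong to the same end of a tree). -/
def ShareTail {α : Type*} (R S : ℕ → α) : Prop := ∃ m n, ∀ k, R (m + k) = S (n + k)

/-- The natural order on oriented edges of a tree: `(i,j) ≤ (k,l)` iff they are equal or
there is a `j`–`k` path avoiding both `i` and `l`. -/
def OEdgeLE (T : SimpleGraph ι) (i j k l : ι) : Prop :=
  (i = k ∧ j = l) ∨ ∃ p : T.Walk j k, p.IsPath ∧ i ∉ p.support ∧ l ∉ p.support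

/-! ### Tree-decompositions -/

/-- A tree-decomposition of `G` with decomposition tree on node set `ι`. -/
structure TreeDecomp (G : SimpleGraph V) (ι : Type u) where
  tree : SimpleGraph ι
  isTree : tree.IsTree
  part : ι → Set V
  covers : ∀ v : V, ∃ i, v ∈ part i
  covers_adj : ∀ ⦃u v : V⦄, G.Adj u v → ∃ i, u ∈ part i ∧ v ∈ part i
  parts_connected : ∀ (v : V) (i j : ι), v ∈ part i → v ∈ part j →
    ∀ p : tree.Walk i j, p.IsPath → ∀ k ∈ p.support, v ∈ part k

namespace TreeDecomp

variable {G : SimpleGraph V} (D : TreeDecomp G ι)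

/-- The separator (adhesion set) associated with the edge `ij` of the decomposition tree. -/
def sep (i j : ι) : Set V := D.part i ∩ D.part j

/-- All separators are finite. -/
def FinSeps : Prop := ∀ i j, D.tree.Adj i j → (D.sep i j).Finite

/-- All separators are connected (they induce connected subgraphs of `G`). -/
def ConnSeps : Prop := ∀ i j, D.tree.Adj i j → (G.induce (D.sep i j)).Connected

/-- The separators are pairwise disjoint. -/
def PairwiseDisjointSeps : Prop :=
  ∀ i j k l, D.tree.Adj i j → D.tree.Adj k l → s(i, j) ≠ s(k, l) →
    Disjoint (D.sep i j) (D.sep k l)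

/-- The union of the parts on the `j`-side of the edge `ij`. -/
def sideSet (i j : ι) : Set V := {v | ∃ k, SameSide D.tree i j k ∧ v ∈ D.part k}

/-- The end of `G` represented by the ray `r` lives at node `t`: for every edge of the
decomposition tree, `r` eventually lies on the side of the edge containing `t`. -/
def LivesAt (r : ℕ → V) (t : ι) : Prop :=
  ∀ i j, D.tree.Adj i j → SameSide D.tree i j t → EventuallyIn r (D.sideSet i j)

/-- The end of `G` represented by the ray `r` corresponds to the end of the decomposition
tree represented by the tree-ray `R`. -/
def CorrespondsTo (r : ℕ → V) (R : ℕ → ι) : Prop :=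
  ∀ n, EventuallyIn r (D.sideSet (R n) (R (n + 1)))

/-- The tree-decomposition displays the set `Ψ` of ends of `G` (given as a predicate on
rays, closed under equivalence): the canonical map sends ends not in `Ψ` to nodes of the
tree, and restricts to a bijection between `Ψ` and the set of ends of the tree. -/
def Displays (Ψ : (ℕ → V) → Prop) : Prop :=
  (∀ r, IsRay G r → ¬ Ψ r → ∃ t, D.LivesAt r t) ∧
  (∀ r, IsRay G r → Ψ r → ∃ R, IsTreeRay D.tree R ∧ D.CorrespondsTo r R) ∧
  (∀ r s R R', IsRay G r → IsRay G s → Ψ r → Ψ s →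
    IsTreeRay D.tree R → IsTreeRay D.tree R' →
    D.CorrespondsTo r R → D.CorrespondsTo s R' →
    (EquivRays G r s ↔ ShareTail R R')) ∧
  (∀ R, IsTreeRay D.tree R → ∃ r, IsRay G r ∧ Ψ r ∧ D.CorrespondsTo r R)

end TreeDecomp

/-- A rooted tree-decomposition. -/
structure RootedTreeDecomp (G : SimpleGraph V) (ι : Type u) extends TreeDecomp G ι where
  root : ι

namespace RootedTreeDecomp

variable {G : SimpleGraph V} (D : RootedTreeDecomp G ι)

/-- The separators are upwards disjoint: for every two distinct edges `e < f` pointing away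
from the root, the associated separators are disjoint. -/
def UpwardsDisjointSeps : Prop :=
  ∀ i j k l, PointsAway D.tree D.root i j → PointsAway D.tree D.root k l →
    (i, j) ≠ (k, l) → treeLE D.tree D.root j k →
    Disjoint (D.sep i j) (D.sep k l)

/-- The separators are essentially disjoint: some set `F` of edges of the decomposition tree
meets every ray of the tree infinitely often and the separators associated with the edges in
`F` are upwards disjoint. -/
def EssentiallyDisjointSeps : Prop :=
  ∃ F : Set (ι × ι),
    (∀ e ∈ F, PointsAway D.tree D.root e.1 e.2) ∧
    (∀ R, IsTreeRay D.tree R →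
      {n | (R n, R (n + 1)) ∈ F ∨ (R (n + 1), R n) ∈ F}.Infinite) ∧
    (∀ e f, e ∈ F → f ∈ F → e ≠ f → treeLE D.tree D.root e.2 f.1 →
      Disjoint (D.sep e.1 e.2) (D.sep f.1 f.2))

/-- The tree-decomposition covers `W` cofinally: every vertex of `W` lies in some part, and
the set of nodes whose parts meet `W` is cofinal in the tree-order. -/
def CoversCofinally (W : Set V) : Prop :=
  (∀ w ∈ W, ∃ t, w ∈ D.part t) ∧
  ∀ t, ∃ s, treeLE D.tree D.root t s ∧ (D.part s ∩ W).Nonempty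

end RootedTreeDecomp

/-! ### `S_ℵ₀`-trees -/

/-- A (rooted) `S_ℵ₀`-tree over `G`: a tree together with a map from oriented edges to
separations of `G` of finite order, commuting with reversal and order-preserving.  The
oriented edge `(i, j)` is mapped to the separation `(B j i, B i j)`, where `B i j` is the
side towards `j`. -/
structure SepTree (G : SimpleGraph V) (ι : Type u) where
  tree : SimpleGraph ι
  isTree : tree.IsTree
  root : ι
  B : ι → ι → Set V
  union_eq : ∀ i j, tree.Adj i j → B i j ∪ B j i = Set.univ
  isSep : ∀ i j, tree.Adj i j → ∀ u v, G.Adj u v →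
    u ∈ B i j \ B j i → v ∉ B j i \ B i j
  finOrder : ∀ i j, tree.Adj i j → (B i j ∩ B j i).Finite
  mono : ∀ i j k l, tree.Adj i j → tree.Adj k l → OEdgeLE tree i j k l → B k l ⊆ B i j

namespace SepTree

variable {G : SimpleGraph V} (S : SepTree G ι)

/-- The separator of the edge `ij`. -/
def sep (i j : ι) : Set V := S.B i j ∩ S.B j i

/-- Upwards disjoint separators. -/
def UpwardsDisjointSeps : Prop :=
  ∀ i j k l, PointsAway S.tree S.root i j → PointsAway S.tree S.root k l →
    (i, j) ≠ (k, l) → treeLE S.tree S.root j k → Disjoint (S.sep i j) (S.sep k l)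

/-- Upwards connected: for every edge pointing away from the root, the big side induces a
connected subgraph. -/
def UpwardsConnected : Prop :=
  ∀ i j, PointsAway S.tree S.root i j → (G.induce (S.B i j)).Connected

/-- The end represented by the ray `r` corresponds to the end of the tree represented by the
tree-ray `R`: for every oriented edge of the ray pointing away from the root, with associated
separation `(A, B)`, the end lives in `G[B \ A]`. -/
def CorrespondsTo (r : ℕ → V) (R : ℕ → ι) : Prop :=
  ∀ n, PointsAway S.tree S.root (R n) (R (n + 1)) →
    EventuallyIn r (S.B (R n) (R (n + 1)) \ S.B (R (n + 1)) (R n))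

/-- The end represented by `r` lives at the node `t`. -/
def LivesAt (r : ℕ → V) (t : ι) : Prop :=
  ∀ i j, S.tree.Adj i j → SameSide S.tree i j t →
    EventuallyIn r (S.B i j \ S.B j i)

/-- The `S_ℵ₀`-tree displays the set `Ψ` of ends of `G`. -/
def Displays (Ψ : (ℕ → V) → Prop) : Prop :=
  (∀ r, IsRay G r → ¬ Ψ r → ∃ t, S.LivesAt r t) ∧
  (∀ r, IsRay G r → Ψ r → ∃ R, IsTreeRay S.tree R ∧ S.CorrespondsTo r R) ∧
  (∀ r s R R', IsRay G r → IsRay G s → Ψ r → Ψ s →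
    IsTreeRay S.tree R → IsTreeRay S.tree R' →
    S.CorrespondsTo r R → S.CorrespondsTo s R' →
    (EquivRays G r s ↔ ShareTail R R')) ∧
  (∀ R, IsTreeRay S.tree R → ∃ r, IsRay G r ∧ Ψ r ∧ S.CorrespondsTo r R)

end SepTree



/-! ### Auxiliary machinery for the proof of Lemma 2.6 -/

namespace StarsCombsAux

variable {W : Type u} {H : SimpleGraph W}

/-- Walk along a sequence with consecutive adjacencies. -/
def walkAlong (f : ℕ → W) (hf : ∀ n, H.Adj (f n) (f (n + 1))) (a : ℕ) :
    (k : ℕ) → H.Walk (f a) (f (a + k))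
  | 0 => Walk.nil
  | (k + 1) => (walkAlong f hf a k).concat
      (show H.Adj (f (a + k)) (f (a + (k + 1))) by
        rw [← Nat.add_assoc]; exact hf (a + k))

lemma support_walkAlong (f : ℕ → W) (hf : ∀ n, H.Adj (f n) (f (n + 1))) (a : ℕ) :
    ∀ k, (walkAlong f hf a k).support = ((List.range (k + 1)).map fun j => f (a + j)) := by
  intro k
  induction k with
  | zero => simp [walkAlong, List.range_succ]
  | succ k ih =>
      rw [walkAlong, Walk.support_concat, ih, List.range_succ (n := k + 1)]
      simp

lemma mem_support_walkAlong_iff (f : ℕ → W) (hf : ∀ n, H.Adj (f n) (f (n + 1))) (a k : ℕ)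
    {w : W} : w ∈ (walkAlong f hf a k).support ↔ ∃ j ≤ k, w = f (a + j) := by
  rw [support_walkAlong]
  simp only [List.mem_map, List.mem_range]
  constructor
  · rintro ⟨j, hj, rfl⟩; exact ⟨j, by omega, rfl⟩
  · rintro ⟨j, hj, rfl⟩; exact ⟨j, by omega, rfl⟩

lemma isPath_walkAlong (f : ℕ → W) (hf : ∀ n, H.Adj (f n) (f (n + 1)))
    (hinj : Function.Injective f) (a k : ℕ) : (walkAlong f hf a k).IsPath := by
  rw [Walk.isPath_def, support_walkAlong]
  refine List.Nodup.map ?_ List.nodup_range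
  intro i j hij
  have := hinj hij
  omega

lemma isPath_concat {u v w : W} {p : H.Walk u v} (hp : p.IsPath) (h : H.Adj v w)
    (hw : w ∉ p.support) : (p.concat h).IsPath := by
  rw [Walk.isPath_def, Walk.support_concat]
  refine List.Nodup.append (Walk.isPath_def _ |>.mp hp) (List.nodup_singleton w) ?_
  intro a ha hb
  rw [List.mem_singleton] at hb
  exact hw (hb ▸ ha)

lemma mem_takeUntil_or [DecidableEq W] :
    ∀ {u v : W} (p : H.Walk u v) (x y : W) (hx : x ∈ p.support) (hy : y ∈ p.support),
      x ∈ (p.takeUntil y hy).support ∨ y ∈ (p.takeUntil x hx).support := by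
  intro u v p
  induction p with
  | nil =>
      intro x y hx hy
      rw [Walk.mem_support_nil_iff] at hx hy
      subst hx; subst hy
      left; exact Walk.start_mem_support _
  | @cons a b c h q ih =>
      intro x y hx hy
      by_cases hxx : a = x
      · subst hxx; left; exact Walk.start_mem_support _
      by_cases hyy : a = y
      · subst hyy; right; exact Walk.start_mem_support _
      · have hx' : x ∈ q.support := by
          cases hx with
          | head => exact absurd rfl hxx
          | tail _ h => exact h
        have hy' : y ∈ q.support := by
          cases hy with
          | head => exact absurd rfl hyy
          | tail _ h => exact h
        have e1 : (Walk.cons h q).takeUntil y hy = Walk.cons h (q.takeUntil y hy') := by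
          rw [Walk.takeUntil]
          simp [hyy]
        have e2 : (Walk.cons h q).takeUntil x hx = Walk.cons h (q.takeUntil x hx') := by
          rw [Walk.takeUntil]
          simp [hxx]
        rcases ih x y hx' hy' with h' | h'
        · left; rw [e1, Walk.support_cons]; exact List.mem_cons_of_mem _ h'
        · right; rw [e2, Walk.support_cons]; exact List.mem_cons_of_mem _ h'


lemma firstT {W : Type u} {H : SimpleGraph W} (A : Set W) :
    ∀ {a b : W} (p : H.Walk a b), b ∈ A →
      ∃ (c : W) (_ : c ∈ A) (p1 : H.Walk a c) (p2 : H.Walk c b),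
        p1.append p2 = p ∧ ∀ w ∈ p1.support, w ≠ c → w ∉ A := by
  intro a b p hb
  induction p with
  | nil =>
      exact ⟨_, hb, Walk.nil, Walk.nil, rfl, fun w hw hne =>
        absurd (by simpa using hw) hne⟩
  | @cons u v w hadj q ih =>
      by_cases hu : u ∈ A
      · exact ⟨u, hu, Walk.nil, Walk.cons hadj q, rfl, fun w hw hne =>
          absurd (by simpa using hw) hne⟩
      · obtain ⟨c, hc, p1, p2, happ, hcond⟩ := ih hb
        refine ⟨c, hc, Walk.cons hadj p1, p2, by rw [Walk.cons_append, happ], ?_⟩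
        intro w hw hne
        rw [Walk.support_cons] at hw
        rcases List.mem_cons.mp hw with rfl | hw'
        · exact hu
        · exact hcond w hw' hne


end StarsCombsAux

namespace RootedTree

variable {G : SimpleGraph V} (T : RootedTree G)

def rootV : T.sub.verts := ⟨T.root, T.root_mem⟩

noncomputable def pathTo {y : V} (hy : y ∈ T.sub.verts) :
    T.sub.coe.Walk T.rootV ⟨y, hy⟩ :=
  (T.isTree.existsUnique_path T.rootV ⟨y, hy⟩).exists.choose

lemma pathTo_isPath {y : V} (hy : y ∈ T.sub.verts) : (T.pathTo hy).IsPath :=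
  (T.isTree.existsUnique_path T.rootV ⟨y, hy⟩).exists.choose_spec

lemma path_eq_pathTo {y : V} (hy : y ∈ T.sub.verts)
    (p : T.sub.coe.Walk T.rootV ⟨y, hy⟩) (hp : p.IsPath) : p = T.pathTo hy :=
  (T.isTree.existsUnique_path T.rootV ⟨y, hy⟩).unique hp (T.pathTo_isPath hy)

lemma tle_of_mem_path {x y : V} {hx : x ∈ T.sub.verts} {hy : y ∈ T.sub.verts}
    (p : T.sub.coe.Walk T.rootV ⟨y, hy⟩) (hp : p.IsPath)
    (hmem : (⟨x, hx⟩ : T.sub.verts) ∈ p.support) : T.tle x y := by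
  refine ⟨hx, hy, fun q hq => ?_⟩
  have : q = T.pathTo hy := T.path_eq_pathTo hy q hq
  have hp' : p = T.pathTo hy := T.path_eq_pathTo hy p hp
  rw [this, ← hp']
  exact hmem

lemma tle.mem_left {x y : V} (h : T.tle x y) : x ∈ T.sub.verts := h.choose

lemma tle.mem_right {x y : V} (h : T.tle x y) : y ∈ T.sub.verts := h.choose_spec.choose

lemma mem_path_of_tle {x y : V} (h : T.tle x y) {hy : y ∈ T.sub.verts}
    (p : T.sub.coe.Walk T.rootV ⟨y, hy⟩) (hp : p.IsPath) :
    (⟨x, h.mem_left⟩ : T.sub.verts) ∈ p.support := by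
  obtain ⟨hx, hy', hall⟩ := h
  exact hall p hp

lemma tle_refl {x : V} (hx : x ∈ T.sub.verts) : T.tle x x :=
  ⟨hx, hx, fun p _ => p.end_mem_support⟩

lemma tle_root {y : V} (hy : y ∈ T.sub.verts) : T.tle T.root y :=
  ⟨T.root_mem, hy, fun p _ => p.start_mem_support⟩

lemma tle_trans {x y z : V} (h1 : T.tle x y) (h2 : T.tle y z) : T.tle x z := by
  classical
  refine ⟨h1.mem_left, h2.mem_right, fun p hp => ?_⟩
  have hy : (⟨y, h1.mem_right⟩ : T.sub.verts) ∈ p.support := T.mem_path_of_tle h2 p hp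
  have hx : (⟨x, h1.mem_left⟩ : T.sub.verts) ∈ (p.takeUntil _ hy).support :=
    T.mem_path_of_tle h1 (p.takeUntil _ hy) (hp.takeUntil hy)
  exact Walk.support_takeUntil_subset p hy hx

lemma tle_antisymm {x y : V} (h1 : T.tle x y) (h2 : T.tle y x) : x = y := by
  classical
  by_contra hne
  set p := T.pathTo h1.mem_right with hpdef
  have hp : p.IsPath := T.pathTo_isPath _
  have hx : (⟨x, h1.mem_left⟩ : T.sub.verts) ∈ p.support := T.mem_path_of_tle h1 p hp
  have hy : (⟨y, h1.mem_right⟩ : T.sub.verts) ∈ (p.takeUntil _ hx).support :=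
    T.mem_path_of_tle h2 (p.takeUntil _ hx) (hp.takeUntil hx)
  have hnodup := (Walk.isPath_def _).mp hp
  rw [← Walk.take_spec p hx, Walk.support_append] at hnodup
  have hdisj := List.disjoint_of_nodup_append hnodup
  have hyd : (⟨y, h1.mem_right⟩ : T.sub.verts) ∈ (p.dropUntil _ hx).support :=
    (p.dropUntil _ hx).end_mem_support
  rw [Walk.support_eq_cons (p.dropUntil _ hx)] at hyd
  rcases List.mem_cons.mp hyd with heq | hmem
  · exact hne (congrArg Subtype.val heq).symm
  · exact hdisj hy hmem

lemma tle_total_of_mem_path {z : V} {hz : z ∈ T.sub.verts}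
    (p : T.sub.coe.Walk T.rootV ⟨z, hz⟩) (hp : p.IsPath) (a b : T.sub.verts)
    (ha : a ∈ p.support) (hb : b ∈ p.support) :
    T.tle a.1 b.1 ∨ T.tle b.1 a.1 := by
  classical
  rcases StarsCombsAux.mem_takeUntil_or p a b ha hb with h | h
  · left
    have hpb : p.takeUntil b hb = _ := rfl
    exact T.tle_of_mem_path (x := a.1) (hx := a.2)
      ((p.takeUntil b hb).copy rfl (by simp)) (by simpa using hp.takeUntil hb)
      (by simpa using h)
  · right
    exact T.tle_of_mem_path (x := b.1) (hx := b.2)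
      ((p.takeUntil a ha).copy rfl (by simp)) (by simpa using hp.takeUntil ha)
      (by simpa using h)


section NormalRay

variable {T} {s : ℕ → V} (hs : T.IsNormalRay s)

lemma IsNormalRay.mem_verts (hs : T.IsNormalRay s) (n : ℕ) : s n ∈ T.sub.verts := by
  cases n with
  | zero => rw [hs.2]; exact T.root_mem
  | succ n => exact (hs.1.2 n).snd_mem

/-- The sequence of a normal ray as vertices of the tree. -/
def IsNormalRay.subF (hs : T.IsNormalRay s) (n : ℕ) : T.sub.verts :=
  ⟨s n, hs.mem_verts n⟩

lemma IsNormalRay.subF_adj (hs : T.IsNormalRay s) (n : ℕ) :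
    T.sub.coe.Adj (hs.subF n) (hs.subF (n + 1)) := hs.1.2 n

/-- The initial segment of a normal ray as a walk from the root. -/
noncomputable def IsNormalRay.walk (hs : T.IsNormalRay s) (n : ℕ) :
    T.sub.coe.Walk T.rootV ⟨s n, hs.mem_verts n⟩ :=
  (StarsCombsAux.walkAlong hs.subF hs.subF_adj 0 n).copy
    (Subtype.ext hs.2) (congrArg hs.subF (Nat.zero_add n))

lemma IsNormalRay.walk_isPath (hs : T.IsNormalRay s) (n : ℕ) : (hs.walk n).IsPath := by
  simp only [IsNormalRay.walk, Walk.isPath_copy]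
  refine (Walk.isPath_copy _ _ _).mpr (StarsCombsAux.isPath_walkAlong _ _ ?_ _ _)
  intro i j hij
  exact hs.1.1 (congrArg Subtype.val hij)

lemma IsNormalRay.mem_walk_support (hs : T.IsNormalRay s) {n : ℕ} {x : T.sub.verts}
    (hx : x ∈ (hs.walk n).support) : ∃ j ≤ n, x.1 = s j := by
  rw [show (hs.walk n).support = (StarsCombsAux.walkAlong hs.subF hs.subF_adj 0 n).support from Walk.support_copy _ _ _] at hx
  rw [StarsCombsAux.mem_support_walkAlong_iff] at hx
  obtain ⟨j, hj, rfl⟩ := hx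
  exact ⟨j, hj, by simp [IsNormalRay.subF]⟩

lemma IsNormalRay.subF_mem_walk_support (hs : T.IsNormalRay s) {j n : ℕ} (hj : j ≤ n) :
    hs.subF j ∈ (hs.walk n).support := by
  rw [show (hs.walk n).support = (StarsCombsAux.walkAlong hs.subF hs.subF_adj 0 n).support from Walk.support_copy _ _ _]
  rw [StarsCombsAux.mem_support_walkAlong_iff]
  exact ⟨j, hj, by rw [Nat.zero_add]⟩

lemma IsNormalRay.tle_of_le (hs : T.IsNormalRay s) {i n : ℕ} (h : i ≤ n) :
    T.tle (s i) (s n) :=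
  T.tle_of_mem_path (hx := hs.mem_verts i) (hs.walk n) (hs.walk_isPath n)
    (hs.subF_mem_walk_support h)

end NormalRay

lemma jump {T : RootedTree G} (hT : T.IsNormal) (x : V) :
    ∀ (N : ℕ) {a b : V} (p : G.Walk a b), p.length ≤ N → p.IsPath →
      a ∈ T.sub.verts → b ∈ T.sub.verts →
      (∀ w ∈ p.support, ¬(T.tle w x ∧ w ≠ x)) → T.tle x a → T.tle x b := by
  intro N
  induction N with
  | zero =>
      intro a b p hlen _ _ _ _ hxa
      have : p.length = 0 := Nat.le_zero.mp hlen
      have hab : a = b := p.eq_of_length_eq_zero this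
      exact hab ▸ hxa
  | succ N ih =>
      intro a b p hlen hp ha hb havoid hxa
      cases p with
      | nil => exact hxa
      | cons hadj q =>
          obtain ⟨c, hc, p1, p2, happ, hcond⟩ := StarsCombsAux.firstT T.sub.verts q hb
          have hpeq : Walk.cons hadj q = (Walk.cons hadj p1).append p2 := by
            rw [Walk.cons_append, happ]
          have hP1 : (Walk.cons hadj p1).IsPath := Walk.IsPath.of_append_left (hpeq ▸ hp)
          have hp2 : p2.IsPath := Walk.IsPath.of_append_right (hpeq ▸ hp)
          have hsub2 : ∀ w ∈ p2.support, w ∈ (Walk.cons hadj q).support := by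
            intro w hw
            rw [hpeq, Walk.mem_support_append_iff]
            exact Or.inr hw
          have hcmem : c ∈ (Walk.cons hadj q).support := by
            rw [hpeq, Walk.mem_support_append_iff]
            exact Or.inl (Walk.end_mem_support _)
          have hcomp : T.tle a c ∨ T.tle c a := by
            refine hT (Walk.cons hadj p1) hP1 (by simp) ha hc ?_
            intro w hw hwa hwc
            rw [Walk.support_cons] at hw
            rcases List.mem_cons.mp hw with rfl | hw'
            · exact absurd rfl hwa
            · exact hcond w hw' hwc
          have hxc : T.tle x c := by
            rcases hcomp with h | h
            · exact T.tle_trans hxa h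
            · rcases T.tle_total_of_mem_path (T.pathTo ha) (T.pathTo_isPath ha)
                ⟨x, hxa.mem_left⟩ ⟨c, hc⟩
                (T.mem_path_of_tle hxa (T.pathTo ha) (T.pathTo_isPath ha))
                (T.mem_path_of_tle h (T.pathTo ha) (T.pathTo_isPath ha)) with h' | h'
              · exact h'
              · by_cases hcx : c = x
                · rw [hcx]; exact T.tle_refl (hcx ▸ hc)
                · exact absurd ⟨h', hcx⟩ (havoid c hcmem)
          have hlen2 : p2.length ≤ N := by
            have h2 := congrArg Walk.length happ
            rw [Walk.length_append] at h2
            rw [Walk.length_cons] at hlen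
            omega
          exact ih p2 hlen2 hp2 hc hb (fun w hw => havoid w (hsub2 w hw)) hxc


end RootedTree

variable {G : SimpleGraph V}

namespace Aux2


variable {G : SimpleGraph V}

lemma tail_bound {r : ℕ → V} (hinj : Function.Injective r) {X : Set V} (hX : X.Finite) :
    ∃ m, ∀ k, m ≤ k → r k ∉ X := by
  have hfin : {k | r k ∈ X}.Finite := hX.preimage hinj.injOn
  obtain ⟨M, hM⟩ := hfin.bddAbove
  refine ⟨M + 1, fun k hk hmem => ?_⟩
  have := hM hmem
  omega

/-- A segment of a ray between two indices, as a walk. -/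
def raySeg {r : ℕ → V} (hr : ∀ n, G.Adj (r n) (r (n + 1))) (a b : ℕ) :
    G.Walk (r a) (r b) :=
  if h : a ≤ b then
    (StarsCombsAux.walkAlong r hr a (b - a)).copy rfl (congrArg r (by omega))
  else
    ((StarsCombsAux.walkAlong r hr b (a - b)).copy rfl (congrArg r (by omega))).reverse

lemma mem_raySeg {r : ℕ → V} (hr : ∀ n, G.Adj (r n) (r (n + 1))) (a b : ℕ)
    {w : V} (hw : w ∈ (raySeg hr a b).support) : ∃ j, (a ≤ j ∨ b ≤ j) ∧ w = r j := by
  rw [raySeg] at hw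
  split_ifs at hw with h
  · rw [Walk.support_copy, StarsCombsAux.mem_support_walkAlong_iff] at hw
    obtain ⟨j, _, rfl⟩ := hw
    exact ⟨a + j, Or.inl (by omega), rfl⟩
  · rw [Walk.support_reverse, List.mem_reverse, Walk.support_copy,
      StarsCombsAux.mem_support_walkAlong_iff] at hw
    obtain ⟨j, _, rfl⟩ := hw
    exact ⟨b + j, Or.inr (by omega), rfl⟩

lemma equivRays_symm {r s : ℕ → V} (h : EquivRays G r s) : EquivRays G s r := by
  intro X hX
  obtain ⟨m, n, p, h1, h2, h3⟩ := h X hX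
  exact ⟨n, m, p.reverse, fun w hw => h1 w (by rwa [Walk.support_reverse, List.mem_reverse] at hw),
    h3, h2⟩

lemma equivRays_self {r : ℕ → V} (hinj : Function.Injective r) : EquivRays G r r := by
  intro X hX
  obtain ⟨m, hm⟩ := tail_bound hinj hX
  exact ⟨m, m, Walk.nil, fun w hw => by
    rw [Walk.support_nil, List.mem_singleton] at hw
    exact hw ▸ hm m le_rfl, hm, hm⟩

lemma equivRays_trans_mid {r s mid : ℕ → V} (hmid : ∀ n, G.Adj (mid n) (mid (n + 1)))
    (h1 : EquivRays G r mid) (h2 : EquivRays G s mid) : EquivRays G r s := by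
  intro X hX
  obtain ⟨m, n, p, hp1, hp2, hp3⟩ := h1 X hX
  obtain ⟨m', n', p', hq1, hq2, hq3⟩ := h2 X hX
  refine ⟨m, m', p.append ((raySeg hmid n n').append p'.reverse), ?_, hp2, hq2⟩
  intro w hw
  rw [Walk.mem_support_append_iff] at hw
  rcases hw with hw | hw
  · exact hp1 w hw
  · rw [Walk.mem_support_append_iff] at hw
    rcases hw with hw | hw
    · obtain ⟨j, hj, rfl⟩ := mem_raySeg hmid n n' hw
      rcases hj with hj | hj
      · exact hp3 j hj
      · exact hq3 j hj
    · exact hq1 w (by rwa [Walk.support_reverse, List.mem_reverse] at hw)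

end Aux2


lemma comb_paths_meet_finite {U : Set V} (c : Comb G U) {X : Set V} (hX : X.Finite) :
    {n | ∃ w ∈ (c.path n).support, w ∈ X}.Finite := by
  have hsub : {n | ∃ w ∈ (c.path n).support, w ∈ X} ⊆
      ⋃ w ∈ X, {n | w ∈ (c.path n).support} := by
    rintro n ⟨w, hw1, hw2⟩
    exact Set.mem_biUnion hw2 hw1
  refine (Set.Finite.biUnion hX (fun w _ => Set.Subsingleton.finite ?_)).subset hsub
  intro n1 h1 n2 h2
  by_contra hne
  exact c.paths_disjoint n1 n2 hne w h1 h2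



namespace RootedTree

variable {T : RootedTree G}

/-- Distinct normal rays of a normal tree are not equivalent. -/
lemma normalRay_eq (hT : T.IsNormal) {s s' : ℕ → V} (hs : T.IsNormalRay s)
    (hs' : T.IsNormalRay s') (heq : EquivRays G s s') : s = s' := by
  by_contra hne
  have hex : ∃ n, s n ≠ s' n := by
    by_contra h
    push_neg at h
    exact hne (funext h)
  classical
  set d := Nat.find hex with hddef
  have hd : s d ≠ s' d := Nat.find_spec hex
  have hlt : ∀ j, j < d → s j = s' j := fun j hj => by
    by_contra h
    exact Nat.find_min hex hj h
  set X : Set V := s '' Set.Iio d with hXdef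
  have hXfin : X.Finite := (Set.finite_Iio d).image s
  obtain ⟨m, n, p, havoid, hta, htb⟩ := heq X hXfin
  have hm : d ≤ m := by
    by_contra h
    exact havoid (s m) p.start_mem_support ⟨m, Set.mem_Iio.mpr (by omega), rfl⟩
  have hn : d ≤ n := by
    by_contra h
    exact havoid (s' n) p.end_mem_support ⟨n, Set.mem_Iio.mpr (by omega), hlt n (by omega)⟩
  -- apply the jump lemma along `p.toPath`
  have hjump : T.tle (s d) (s' n) := by
    refine jump hT (s d) (p.bypass.length) p.bypass le_rfl p.bypass_isPath
      (hs.mem_verts m) (hs'.mem_verts n) ?_ (hs.tle_of_le hm)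
    intro w hw ⟨hwle, hwne⟩
    have hw' : w ∈ p.support := p.support_bypass_subset hw
    have hmem := T.mem_path_of_tle hwle (hs.walk d) (hs.walk_isPath d)
    obtain ⟨j, hj, hwj⟩ := hs.mem_walk_support hmem
    have hwj' : w = s j := hwj
    rcases lt_or_eq_of_le hj with hj' | hj'
    · exact havoid w hw' ⟨j, Set.mem_Iio.mpr hj', hwj'.symm⟩
    · exact hwne (by rw [hwj', hj'])
  have hmem := T.mem_path_of_tle hjump (hs'.walk n) (hs'.walk_isPath n)
  obtain ⟨j, hj, hsd⟩ := hs'.mem_walk_support hmem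
  have hsd' : s d = s' j := hsd
  rcases lt_trichotomy j d with hj' | hj' | hj'
  · rw [← hlt j hj'] at hsd'
    exact absurd (hs.1.1 hsd') (by omega)
  · rw [hj'] at hsd'
    exact hd hsd'
  · -- s d = s' j with j > d, so s' d ≤ s' j = s d
    have h1 : T.tle (s' d) (s d) := by
      have := hs'.tle_of_le (le_of_lt hj')
      rwa [← hsd'] at this
    have hmem2 := T.mem_path_of_tle h1 (hs.walk d) (hs.walk_isPath d)
    obtain ⟨i, hi, hsi⟩ := hs.mem_walk_support hmem2
    have hsi' : s' d = s i := hsi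
    rcases lt_or_eq_of_le hi with hi' | hi'
    · rw [hlt i hi'] at hsi'
      exact absurd (hs'.1.1 hsi'.symm) (by omega)
    · rw [hi'] at hsi'
      exact hd hsi'.symm


lemma tle_of_mem_dropUntil [DecidableEq T.sub.verts] {y : V} (hy : y ∈ T.sub.verts)
    {x a : T.sub.verts} (hx : x ∈ (T.pathTo hy).support)
    (ha : a ∈ ((T.pathTo hy).dropUntil x hx).support) : T.tle x.1 a.1 := by
  set p := T.pathTo hy with hpdef
  have hp : p.IsPath := T.pathTo_isPath hy
  set dr := p.dropUntil x hx with hdrdef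
  set Q := (p.takeUntil x hx).append (dr.takeUntil a ha) with hQdef
  have hQ : Q.IsPath := by
    refine Walk.IsPath.of_append_left (q := dr.dropUntil a ha) ?_
    rw [hQdef, ← Walk.append_assoc, Walk.take_spec dr ha, Walk.take_spec p hx]
    exact hp
  refine T.tle_of_mem_path (hx := x.2) (hy := a.2) Q hQ ?_
  rw [hQdef, Walk.mem_support_append_iff]
  exact Or.inl (Walk.end_mem_support _)

lemma strict_down_child {t v w : V} (ht : t ∈ T.sub.verts) (hadj : T.sub.Adj t v)
    (htv : T.tle t v) (hw : T.tle w v) (hwv : w ≠ v) : T.tle w t := by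
  have hvmem : v ∈ T.sub.verts := hadj.snd_mem
  have hcoe : T.sub.coe.Adj ⟨t, ht⟩ ⟨v, hvmem⟩ := hadj
  have hvnot : (⟨v, hvmem⟩ : T.sub.verts) ∉ (T.pathTo ht).support := by
    intro hmem
    have : T.tle v t := T.tle_of_mem_path (T.pathTo ht) (T.pathTo_isPath ht) hmem
    exact hadj.ne (T.tle_antisymm htv this)
  set Q := (T.pathTo ht).concat hcoe with hQdef
  have hQ : Q.IsPath := StarsCombsAux.isPath_concat (T.pathTo_isPath ht) hcoe hvnot
  have hmem := T.mem_path_of_tle hw Q hQ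
  rw [hQdef, Walk.support_concat, List.mem_append] at hmem
  rcases hmem with hmem | hmem
  · exact T.tle_of_mem_path (T.pathTo ht) (T.pathTo_isPath ht) hmem
  · rw [List.mem_singleton] at hmem
    exact absurd (congrArg Subtype.val hmem) hwv

lemma exists_normalRay (hT : T.IsNormal) (c : Comb G T.sub.verts) :
    ∃ s, T.IsNormalRay s ∧ EquivRays G s c.spine := by
  classical
  set u := c.tooth with hudef
  have huinj : Function.Injective u := by
    intro a b hab
    by_contra hne
    exact c.paths_disjoint a b hne (u b) (hab ▸ (c.path a).end_mem_support)
      (c.path b).end_mem_support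
  have hstartinj : Function.Injective c.start := by
    intro a b hab
    by_contra hne
    exact c.paths_disjoint a b hne (c.spine (c.start a)) (c.path a).start_mem_support
      (by rw [hab]; exact (c.path b).start_mem_support)
  have hsadj := c.spine_ray.2
  have hspineinj := c.spine_ray.1
  set good : V → Prop := fun t => t ∈ T.sub.verts ∧ {n | T.tle t (u n)}.Infinite with hgood
  have hroot : good T.root := by
    refine ⟨T.root_mem, ?_⟩
    have : {n | T.tle T.root (u n)} = Set.univ :=
      Set.eq_univ_of_forall fun n => T.tle_root (c.tooth_mem n)
    rw [this]
    exact Set.infinite_univ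
  have hstep : ∀ t, good t → ∃ t', good t' ∧ T.sub.Adj t t' ∧ T.tle t t' ∧ t ≠ t' := by
    rintro t ⟨ht, hinf⟩
    set A : Set ℕ := {n | T.tle t (u n) ∧ u n ≠ t} with hAdef
    have hA : A.Infinite := by
      have hfin : {n | u n = t}.Finite :=
        Set.Subsingleton.finite fun a ha b hb => huinj (ha.trans hb.symm)
      refine Set.Infinite.mono ?_ (hinf.diff hfin)
      rintro n ⟨h1, h2⟩
      exact ⟨h1, h2⟩
    have hchild : ∀ n, n ∈ A → ∃ v, T.sub.Adj t v ∧ T.tle t v ∧ T.tle v (u n) := by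
      rintro n ⟨htu, hut⟩
      have hun : u n ∈ T.sub.verts := c.tooth_mem n
      have hp := T.pathTo_isPath hun
      have hmem : (⟨t, ht⟩ : T.sub.verts) ∈ (T.pathTo hun).support :=
        T.mem_path_of_tle htu _ hp
      set q := (T.pathTo hun).dropUntil _ hmem with hqdef
      have hqnil : ¬ q.Nil := by
        intro h
        exact hut (congrArg Subtype.val h.eq).symm
      have hlen : 0 < q.length := Walk.not_nil_iff_lt_length.mp hqnil
      have hadj0 : T.sub.coe.Adj (q.getVert 0) (q.getVert 1) := q.adj_getVert_succ hlen
      rw [Walk.getVert_zero] at hadj0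
      set v := q.getVert 1 with hvdef
      have hvmem : v ∈ q.support :=
        Walk.mem_support_iff_exists_getVert.mpr ⟨1, rfl, by omega⟩
      have htv : T.tle t v.1 := T.tle_of_mem_dropUntil hun hmem hvmem
      have hvu : T.tle v.1 (u n) :=
        T.tle_of_mem_path _ hp (Walk.support_dropUntil_subset _ hmem hvmem)
      exact ⟨v.1, hadj0, htv, hvu⟩
    have hchild' : ∀ n, ∃ v, n ∈ A → T.sub.Adj t v ∧ T.tle t v ∧ T.tle v (u n) := by
      intro n
      by_cases h : n ∈ A
      · obtain ⟨v, hv⟩ := hchild n h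
        exact ⟨v, fun _ => hv⟩
      · exact ⟨t, fun h' => absurd h' h⟩
    choose f hf using hchild'
    by_cases hfib : ∃ v, {n | n ∈ A ∧ f n = v}.Infinite
    · obtain ⟨v, hv⟩ := hfib
      obtain ⟨n₀, hn₀A, hn₀⟩ := hv.nonempty
      obtain ⟨hadj, htv, _⟩ := hf n₀ hn₀A
      rw [hn₀] at hadj htv
      refine ⟨v, ⟨hadj.snd_mem, ?_⟩, hadj, htv, fun h => hadj.ne h⟩
      refine Set.Infinite.mono ?_ hv
      rintro n ⟨hnA, hfn⟩
      have := (hf n hnA).2.2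
      rwa [hfn] at this
    · push_neg at hfib
      exfalso
      set X : Set V := {w | T.tle w t} with hXdef
      have hXfin : X.Finite := by
        have hsub : X ⊆ Subtype.val '' {a | a ∈ (T.pathTo ht).support} := by
          intro w hw
          exact ⟨⟨w, hw.mem_left⟩, T.mem_path_of_tle hw _ (T.pathTo_isPath ht), rfl⟩
        exact (((T.pathTo ht).support.finite_toSet).image _).subset hsub
      obtain ⟨N₀, hN₀⟩ := Aux2.tail_bound hspineinj hXfin
      have hF1 := comb_paths_meet_finite c hXfin
      have hF2 : {n | c.start n < N₀}.Finite := (Set.finite_Iio N₀).preimage hstartinj.injOn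
      have hAinf : (A \ ({n | ∃ w ∈ (c.path n).support, w ∈ X} ∪ {n | c.start n < N₀})).Infinite :=
        hA.diff (hF1.union hF2)
      obtain ⟨n₁, hn₁⟩ := hAinf.nonempty
      have hfib1 : {n | n ∈ A ∧ f n = f n₁}.Finite := hfib (f n₁)
      obtain ⟨n₂, hn₂⟩ := (hAinf.diff hfib1).nonempty
      have hn₁A : n₁ ∈ A := hn₁.1
      have hn₂A : n₂ ∈ A := hn₂.1.1
      have hne : f n₂ ≠ f n₁ := fun h => hn₂.2 ⟨hn₂.1.1, h⟩
      obtain ⟨hadj₁, htv₁, hvu₁⟩ := hf n₁ hn₁A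
      obtain ⟨hadj₂, htv₂, hvu₂⟩ := hf n₂ hn₂A
      have hn₁F1 : ¬ ∃ w ∈ (c.path n₁).support, w ∈ X := fun h => hn₁.2 (Or.inl h)
      have hn₂F1 : ¬ ∃ w ∈ (c.path n₂).support, w ∈ X := fun h => hn₂.1.2 (Or.inl h)
      have hn₁F2 : N₀ ≤ c.start n₁ := by
        by_contra h
        have h' : c.start n₁ < N₀ := by omega
        exact hn₁.2 (Or.inr h')
      have hn₂F2 : N₀ ≤ c.start n₂ := by
        by_contra h
        have h' : c.start n₂ < N₀ := by omega
        exact hn₂.1.2 (Or.inr h')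
      set Wk := (c.path n₁).reverse.append
        ((Aux2.raySeg hsadj (c.start n₁) (c.start n₂)).append (c.path n₂)) with hWdef
      have havoid : ∀ w ∈ Wk.support, w ∉ X := by
        intro w hw
        rw [hWdef, Walk.mem_support_append_iff] at hw
        rcases hw with hw | hw
        · rw [Walk.support_reverse, List.mem_reverse] at hw
          exact fun hX' => hn₁F1 ⟨w, hw, hX'⟩
        · rw [Walk.mem_support_append_iff] at hw
          rcases hw with hw | hw
          · obtain ⟨j, hj, rfl⟩ := Aux2.mem_raySeg hsadj _ _ hw
            refine hN₀ j ?_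
            rcases hj with hj | hj <;> omega
          · exact fun hX' => hn₂F1 ⟨w, hw, hX'⟩
      have hjump : T.tle (f n₁) (u n₂) := by
        refine jump hT (f n₁) Wk.bypass.length Wk.bypass le_rfl Wk.bypass_isPath
          (c.tooth_mem n₁) (c.tooth_mem n₂) ?_ hvu₁
        rintro w hw ⟨hwle, hwne⟩
        exact havoid w (Wk.support_bypass_subset hw)
          (strict_down_child ht hadj₁ htv₁ hwle hwne)
      have hp₂ := T.pathTo_isPath (c.tooth_mem n₂)
      rcases T.tle_total_of_mem_path (T.pathTo (c.tooth_mem n₂)) hp₂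
        ⟨f n₁, hadj₁.snd_mem⟩ ⟨f n₂, hadj₂.snd_mem⟩
        (T.mem_path_of_tle hjump _ hp₂) (T.mem_path_of_tle hvu₂ _ hp₂) with hcc | hcc
      · have h1 : T.tle (f n₁) t := strict_down_child ht hadj₂ htv₂ hcc (fun h => hne h.symm)
        exact hadj₁.ne (T.tle_antisymm htv₁ h1)
      · have h1 : T.tle (f n₂) t := strict_down_child ht hadj₁ htv₁ hcc hne
        exact hadj₂.ne (T.tle_antisymm htv₂ h1)
  -- build the normal ray by recursion
  let S : ℕ → {t : V // good t} := fun n => Nat.rec ⟨T.root, hroot⟩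
    (fun _ p => ⟨(hstep p.1 p.2).choose, (hstep p.1 p.2).choose_spec.1⟩) n
  have hS : ∀ n, T.sub.Adj (S n).1 (S (n + 1)).1 ∧ T.tle (S n).1 (S (n + 1)).1 ∧
      (S n).1 ≠ (S (n + 1)).1 := fun n => (hstep (S n).1 (S n).2).choose_spec.2
  set s : ℕ → V := fun n => (S n).1 with hsdef
  have hmono : ∀ m n, m ≤ n → T.tle (s m) (s n) := by
    intro m n h
    induction n, h using Nat.le_induction with
    | base => exact T.tle_refl (S m).2.1
    | succ k hk ih => exact T.tle_trans ih (hS k).2.1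
  have hsinj' : Function.Injective s := by
    intro a b hab
    by_contra hne
    rcases lt_or_gt_of_ne hne with h | h
    · have h1 : T.tle (s (a + 1)) (s b) := hmono (a + 1) b (by omega)
      rw [← hab] at h1
      exact (hS a).2.2 (T.tle_antisymm (hS a).2.1 h1)
    · have h1 : T.tle (s (b + 1)) (s a) := hmono (b + 1) a (by omega)
      rw [hab] at h1
      exact (hS b).2.2 (T.tle_antisymm (hS b).2.1 h1)
  have hray : T.IsNormalRay s := ⟨⟨hsinj', fun n => (hS n).1⟩, rfl⟩
  refine ⟨s, hray, ?_⟩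
  intro X hX
  have hBfin : {m | ∃ x ∈ X, T.tle (s m) x}.Finite := by
    have hsub : {m | ∃ x ∈ X, T.tle (s m) x} ⊆ ⋃ x ∈ X, {m | T.tle (s m) x} := by
      rintro m ⟨x, hx1, hx2⟩
      exact Set.mem_biUnion hx1 hx2
    refine (Set.Finite.biUnion hX (fun x _ => ?_)).subset hsub
    by_cases hx : x ∈ T.sub.verts
    · have hsub2 : {m | T.tle (s m) x} ⊆
          s ⁻¹' (Subtype.val '' {a | a ∈ (T.pathTo hx).support}) := by
        intro m hm
        exact ⟨⟨s m, hm.mem_left⟩, T.mem_path_of_tle hm _ (T.pathTo_isPath hx), rfl⟩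
      exact ((((T.pathTo hx).support.finite_toSet).image _).preimage hsinj'.injOn).subset hsub2
    · have : {m | T.tle (s m) x} = ∅ :=
        Set.eq_empty_of_forall_notMem fun m hm => hx hm.mem_right
      rw [this]
      exact Set.finite_empty
  obtain ⟨Mb, hMb⟩ := hBfin.bddAbove
  set M := Mb + 1 with hMdef
  have hM : ∀ x ∈ X, ¬ T.tle (s M) x := by
    intro x hx h
    have : M ≤ Mb := hMb ⟨x, hx, h⟩
    omega
  have htail_s : ∀ k, M ≤ k → s k ∉ X := fun k hk hmem =>
    hM (s k) hmem (hmono M k hk)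
  obtain ⟨N₀, hN₀⟩ := Aux2.tail_bound hspineinj hX
  have hF1 := comb_paths_meet_finite c hX
  have hF2 : {n | c.start n < N₀}.Finite := (Set.finite_Iio N₀).preimage hstartinj.injOn
  obtain ⟨n, hn⟩ := (((S M).2.2).diff (hF1.union hF2)).nonempty
  have hnle : T.tle (s M) (u n) := hn.1
  have hnF1 : ¬ ∃ w ∈ (c.path n).support, w ∈ X := fun h => hn.2 (Or.inl h)
  have hnF2 : N₀ ≤ c.start n := by
    by_contra h
    have h' : c.start n < N₀ := by omega
    exact hn.2 (Or.inr h')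
  have hpn := T.pathTo_isPath (c.tooth_mem n)
  have hmem : (⟨s M, (S M).2.1⟩ : T.sub.verts) ∈ (T.pathTo (c.tooth_mem n)).support :=
    T.mem_path_of_tle hnle _ hpn
  set seg := (T.pathTo (c.tooth_mem n)).dropUntil _ hmem with hsegdef
  set segG := seg.map T.sub.hom with hsegGdef
  have hsegGav : ∀ w ∈ segG.support, w ∉ X := by
    intro w hw
    rw [hsegGdef, Walk.support_map] at hw
    obtain ⟨a, ha, rfl⟩ := List.mem_map.mp hw
    exact fun hmemX => hM _ hmemX (T.tle_of_mem_dropUntil (c.tooth_mem n) hmem ha)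
  refine ⟨M, c.start n, segG.append (c.path n).reverse, ?_, htail_s,
    fun k hk => hN₀ k (le_trans hnF2 hk)⟩
  intro w hw
  replace hw := (Walk.mem_support_append_iff _ _).mp hw
  rcases hw with hw | hw
  · exact hsegGav w hw
  · replace hw : w ∈ (c.path n).reverse.support := hw
    rw [Walk.support_reverse, List.mem_reverse] at hw
    exact fun hX' => hnF1 ⟨w, hw, hX'⟩


end RootedTree

/-- If `T ⊆ G` is a normal tree, then every end of `G` in the closure of `V(T)` contains
exactly one normal ray of `T`; moreover, sending these ends to the normal rays they contain
defines a bijection between `∂_Ω T` and the normal rays of `T` (Lemma 2.6). -/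
theorem end_in_closure_unique_normalRay {V : Type u} (G : SimpleGraph V)
    (T : RootedTree G) (hT : T.IsNormal) :
    (∀ r, IsRay G r → InClosure G T.sub.verts r →
        ∃! s : ℕ → V, T.IsNormalRay s ∧ EquivRays G s r) ∧
      (∀ s, T.IsNormalRay s → InClosure G T.sub.verts s) ∧
      (∀ r r' s, IsRay G r → IsRay G r' → InClosure G T.sub.verts r →
        InClosure G T.sub.verts r' → T.IsNormalRay s →
        EquivRays G s r → EquivRays G s r' → EquivRays G r r') := by
  classical
  refine ⟨?_, ?_, ?_⟩
  · -- every end in the closure of `V(T)` contains exactly one normal ray of `T`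
    intro r hr hcl
    obtain ⟨c, hcr⟩ := hcl
    obtain ⟨s, hs, hseq⟩ := RootedTree.exists_normalRay hT c
    have hsr : EquivRays G s r :=
      Aux2.equivRays_trans_mid c.spine_ray.2 hseq (Aux2.equivRays_symm hcr)
    refine ⟨s, ⟨hs, hsr⟩, ?_⟩
    rintro s' ⟨hs', hs'r⟩
    exact RootedTree.normalRay_eq hT hs' hs (Aux2.equivRays_trans_mid hr.2 hs'r hsr)
  · -- every normal ray of `T` represents an end in the closure of `V(T)`
    intro s hs
    refine ⟨⟨s, ⟨hs.1.1, fun n => (hs.1.2 n).adj_sub⟩, id, s, hs.mem_verts,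
      fun n => Walk.nil, fun _ => Walk.IsPath.nil, ?_, ?_⟩, Aux2.equivRays_self hs.1.1⟩
    · intro n w hw _
      rw [Walk.support_nil, List.mem_singleton] at hw
      exact hw
    · intro m n hmn w hwm hwn
      rw [Walk.support_nil, List.mem_singleton] at hwm hwn
      exact hmn (hs.1.1 (hwm ▸ hwn))
  · -- two ends containing the same normal ray coincide
    intro r r' s hr hr' _ _ hs h1 h2
    exact Aux2.equivRays_trans_mid (fun n => (hs.1.2 n).adj_sub)
      (Aux2.equivRays_symm h1) (Aux2.equivRays_symm h2)

end StarsCombs
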